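/- Let (P,≤P) and (Q,≤Q) be posets, let A ⊆ P be universally inductive in P and B ⊆ Q be universally inductive in Q. Then A × B is universally inductive in P × Q with the componentwise partial order: every nonempty chain in P × Q, each of whose elements is bounded above by some element of A × B, has an upper bound belonging to A × B. -/

import Mathlib

/-- A subset `A` of a preorder is *inductive*: every nonempty chain contained in `A`
has an upper bound belonging to `A`. -/
def IsInductiveSet {α : Type*} [Preorder α] (A : Set α) : Prop :=
  ∀ c : Set α, c ⊆ A → c.Nonempty → IsChain (· ≤ ·) c → ∃ b ∈ A, ∀ x ∈ c, x ≤ b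

/-- Dual notion: every nonempty chain contained in `A` has a lower bound belonging to `A`. -/
def IsCoinductiveSet {α : Type*} [Preorder α] (A : Set α) : Prop :=
  ∀ c : Set α, c ⊆ A → c.Nonempty → IsChain (· ≤ ·) c → ∃ b ∈ A, ∀ x ∈ c, b ≤ x

/-- `A` is *universally inductive in `P`*: every nonempty chain contained in `P`, each of
whose elements is bounded above by some element of `A`, has an upper bound belonging to `A`. -/
def IsUnivInductiveIn {α : Type*} [Preorder α] (P A : Set α) : Prop :=
  ∀ c : Set α, c ⊆ P → c.Nonempty → IsChain (· ≤ ·) c →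
    (∀ x ∈ c, ∃ a ∈ A, x ≤ a) → ∃ b ∈ A, ∀ x ∈ c, x ≤ b

/-- Dual notion of universal inductivity (in the order-dual of `P`). -/
def IsUnivCoinductiveIn {α : Type*} [Preorder α] (P A : Set α) : Prop :=
  ∀ c : Set α, c ⊆ P → c.Nonempty → IsChain (· ≤ ·) c →
    (∀ x ∈ c, ∃ a ∈ A, a ≤ x) → ∃ b ∈ A, ∀ x ∈ c, b ≤ x

/-- `A` is a *chain-complete subset*: every nonempty chain contained in `A` has a
least upper bound in the ambient poset, and this least upper bound belongs to `A`. -/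
def IsChainCompleteIn {α : Type*} [Preorder α] (A : Set α) : Prop :=
  ∀ c : Set α, c ⊆ A → c.Nonempty → IsChain (· ≤ ·) c → ∃ b ∈ A, IsLUB c b

/-- A set-valued map `F` with domain `C` is *order-increasing upward*. -/
def IncUpwardOn {α β : Type*} [Preorder α] [Preorder β] (C : Set α) (F : α → Set β) : Prop :=
  ∀ ⦃x₁⦄, x₁ ∈ C → ∀ ⦃x₂⦄, x₂ ∈ C → x₁ ≤ x₂ → ∀ z ∈ F x₁, ∃ w ∈ F x₂, z ≤ w

/-- A set-valued map `F` with domain `C` is *order-increasing downward*. -/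
def IncDownwardOn {α β : Type*} [Preorder α] [Preorder β] (C : Set α) (F : α → Set β) : Prop :=
  ∀ ⦃x₁⦄, x₁ ∈ C → ∀ ⦃x₂⦄, x₂ ∈ C → x₁ ≤ x₂ → ∀ w ∈ F x₂, ∃ z ∈ F x₁, z ≤ w

/-- the product of universally inductive subsets is universally
inductive in the product poset. -/
theorem prod_univInductive {P Q : Type*} [PartialOrder P] [PartialOrder Q]
    (A : Set P) (B : Set Q)
    (hA : IsUnivInductiveIn Set.univ A) (hB : IsUnivInductiveIn Set.univ B) :
    IsUnivInductiveIn Set.univ (A ×ˢ B) := by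
  intro c _ hne hchain hbd
  have hc1 : IsChain (· ≤ ·) (Prod.fst '' c) :=
    hchain.image_of_map_rel _ _ Prod.fst (fun _ _ h => h.1)
  have hc2 : IsChain (· ≤ ·) (Prod.snd '' c) :=
    hchain.image_of_map_rel _ _ Prod.snd (fun _ _ h => h.2)
  obtain ⟨a, haA, ha⟩ := hA (Prod.fst '' c) (Set.subset_univ _) (hne.image _) hc1
    (by rintro x ⟨p, hp, rfl⟩
        obtain ⟨ab, ⟨h1, h2⟩, hle⟩ := hbd p hp
        exact ⟨ab.1, h1, hle.1⟩)
  obtain ⟨b, hbB, hb⟩ := hB (Prod.snd '' c) (Set.subset_univ _) (hne.image _) hc2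
    (by rintro y ⟨p, hp, rfl⟩
        obtain ⟨ab, ⟨h1, h2⟩, hle⟩ := hbd p hp
        exact ⟨ab.2, h2, hle.2⟩)
  exact ⟨(a, b), ⟨haA, hbB⟩, fun x hx =>
    ⟨ha _ ⟨x, hx, rfl⟩, hb _ ⟨x, hx, rfl⟩⟩⟩
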